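/- Let X_1,…,X_n be i.i.d. with law μ_X ∈ 𝒫_ac(ℝ^{d_1}) and Y_1,…,Y_n be i.i.d. with law μ_Y ∈ 𝒫_ac(ℝ^{d_2}), with the X-sample independent of the Y-sample (the null hypothesis of independence). Fix distinct points h^{d_1}_1,…,h^{d_1}_n ∈ [0,1]^{d_1} and distinct points h^{d_2}_1,…,h^{d_2}_n ∈ [0,1]^{d_2}, and let σ̂_X, σ̂_Y be measurable random permutations of {1,…,n} that are almost surely optimal assignments of the X-sample to the first grid and of the Y-sample to the second grid. Then the law of RdCov_n² equals the law of the same functional evaluated with the empirical ranks replaced by (h^{d_1}_{π_1(k)})_{k≤n} and (h^{d_2}_{π_2(k)})_{k≤n}, where π_1, π_2 are independent uniformly distributed random permutations of {1,…,n}; in particular, the distribution of RdCov_n² is the same for all such pairs (μ_X, μ_Y). -/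

import Mathlib

open MeasureTheory ProbabilityTheory Filter Topology
open scoped ENNReal NNReal Classical

noncomputable section

/-- `Euc d` is the Euclidean space `ℝ^d` with its Euclidean norm. -/
abbrev Euc (d : ℕ) : Type := EuclideanSpace ℝ (Fin d)

/-- The unit cube `[0,1]^d`. -/
def unitCube (d : ℕ) : Set (Euc d) := {x | ∀ i, x i ∈ Set.Icc (0 : ℝ) 1}

/-- A permutation `σ` is an optimal assignment of the points `x` to the points `h` if it
minimizes `σ ↦ ∑ i ‖x i − h (σ i)‖²` over all permutations. -/
def IsOptAssign {d n : ℕ} (x h : Fin n → Euc d) (σ : Equiv.Perm (Fin n)) : Prop :=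
  ∀ τ : Equiv.Perm (Fin n), ∑ i, ‖x i - h (σ i)‖ ^ 2 ≤ ∑ i, ‖x i - h (τ i)‖ ^ 2

/-- The rank distance covariance statistic `RdCov_n² = S₁ + S₂ − 2S₃`, as a function of the
vectors of empirical ranks `rX, rY`. -/
def rdcovStat {d₁ d₂ : ℕ} (n : ℕ) (rX : Fin n → Euc d₁) (rY : Fin n → Euc d₂) : ℝ :=
  (∑ k, ∑ l, ‖rX k - rX l‖ * ‖rY k - rY l‖) / (n : ℝ) ^ 2
  + ((∑ k, ∑ l, ‖rX k - rX l‖) / (n : ℝ) ^ 2) * ((∑ k, ∑ l, ‖rY k - rY l‖) / (n : ℝ) ^ 2)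
  - 2 * ((∑ k, ∑ l, ∑ m, ‖rX k - rX l‖ * ‖rY k - rY m‖) / (n : ℝ) ^ 3)

open scoped RealInnerProductSpace

namespace Stmt8Aux

variable {d n : ℕ}

/-- The assignment cost of the permutation `σ`. -/
def cost (h : Fin n → Euc d) (x : Fin n → Euc d) (σ : Equiv.Perm (Fin n)) : ℝ :=
  ∑ i, ‖x i - h (σ i)‖ ^ 2

lemma measurable_cost (h : Fin n → Euc d) (σ : Equiv.Perm (Fin n)) :
    Measurable fun x : Fin n → Euc d => cost h x σ := by
  apply Finset.measurable_sum
  intro i _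
  exact ((measurable_pi_apply i).sub measurable_const).norm.pow_const 2

/-- The set of `x` for which `τ` is the strictly unique optimal assignment. -/
def strictSet (h : Fin n → Euc d) (τ : Equiv.Perm (Fin n)) : Set (Fin n → Euc d) :=
  {x | ∀ σ : Equiv.Perm (Fin n), σ ≠ τ → cost h x τ < cost h x σ}

lemma measurableSet_strictSet (h : Fin n → Euc d) (τ : Equiv.Perm (Fin n)) :
    MeasurableSet (strictSet h τ) := by
  have hrw : strictSet h τ
      = ⋂ σ : Equiv.Perm (Fin n), {x | σ ≠ τ → cost h x τ < cost h x σ} := by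
    ext x; simp [strictSet]
  rw [hrw]
  refine MeasurableSet.iInter fun σ => ?_
  by_cases hστ : σ = τ
  · simp [hστ]
  · have : {x : Fin n → Euc d | σ ≠ τ → cost h x τ < cost h x σ}
        = {x | cost h x τ < cost h x σ} := by
      ext x; simp [hστ]
    rw [this]
    exact measurableSet_lt (measurable_cost h τ) (measurable_cost h σ)

lemma strictSet_disjoint (h : Fin n → Euc d) {τ₁ τ₂ : Equiv.Perm (Fin n)} (hne : τ₁ ≠ τ₂) :
    Disjoint (strictSet h τ₁) (strictSet h τ₂) := by
  rw [Set.disjoint_left]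
  intro x h1 h2
  exact lt_asymm (h1 τ₂ hne.symm) (h2 τ₁ hne)

lemma hyperplane_null {w : Euc d} (hw : w ≠ 0) (t : ℝ) :
    volume {a : Euc d | ⟪w, a⟫ = t} = 0 := by
  have hww : ⟪w, w⟫ ≠ 0 := fun h => hw (inner_self_eq_zero.1 h)
  set a₀ : Euc d := (t / ⟪w, w⟫) • w with ha₀def
  have ha0 : ⟪w, a₀⟫ = t := by
    rw [ha₀def, real_inner_smul_right, div_mul_cancel₀ _ hww]
  set K : Set (Euc d) := (LinearMap.ker ((innerSL ℝ w : Euc d →L[ℝ] ℝ) : Euc d →ₗ[ℝ] ℝ) : Set (Euc d)) with hKdef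
  have hK : volume K = 0 := by
    apply Measure.addHaar_submodule
    intro htop
    apply hww
    have hwmem : w ∈ LinearMap.ker ((innerSL ℝ w : Euc d →L[ℝ] ℝ) : Euc d →ₗ[ℝ] ℝ) := htop ▸ Submodule.mem_top
    simpa using hwmem
  have hset : {a : Euc d | ⟪w, a⟫ = t} = (fun b : Euc d => -a₀ + b) ⁻¹' K := by
    ext a
    simp only [Set.mem_setOf_eq, Set.mem_preimage, hKdef, SetLike.mem_coe,
      LinearMap.mem_ker, ContinuousLinearMap.coe_coe, innerSL_apply_apply, inner_add_right, inner_neg_right, ha0]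
    constructor <;> intro hh <;> linarith
  rw [hset, measure_preimage_add]
  exact hK

lemma pi_inner_null (μ : Measure (Euc d)) [IsProbabilityMeasure μ] (hac : μ ≪ volume)
    (w : Fin n → Euc d) (i₀ : Fin n) (hw : w i₀ ≠ 0) (c : ℝ) :
    Measure.pi (fun _ : Fin n => μ) {x | ∑ i, ⟪w i, x i⟫ = c} = 0 := by
  match n, i₀, w, hw with
  | n + 1, i₀, w, hw =>
  set ψ := MeasurableEquiv.piFinSuccAbove (fun _ : Fin (n + 1) => Euc d) i₀ with hψ
  set D : Set (Euc d × (Fin n → Euc d)) :=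
    {p | ⟪w i₀, p.1⟫ + ∑ j, ⟪w (i₀.succAbove j), p.2 j⟫ = c} with hD
  have hDmeas : MeasurableSet D := by
    have hm : Measurable fun p : Euc d × (Fin n → Euc d) =>
        ⟪w i₀, p.1⟫ + ∑ j, ⟪w (i₀.succAbove j), p.2 j⟫ := by
      apply Measurable.add
      · exact measurable_const.inner measurable_fst
      · refine Finset.measurable_sum _ fun j _ => measurable_const.inner ?_
        exact Measurable.eval measurable_snd
    exact hm (measurableSet_singleton c)
  have hpre : {x : Fin (n + 1) → Euc d | ∑ i, ⟪w i, x i⟫ = c} = ψ ⁻¹' D := by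
    ext x
    simp only [Set.mem_setOf_eq, Set.mem_preimage, hD, hψ,
      MeasurableEquiv.piFinSuccAbove_apply]
    rw [Fin.sum_univ_succAbove (fun i => ⟪w i, x i⟫) i₀]
    simp [Fin.insertNthEquiv, Fin.removeNth]
  rw [hpre, ← Measure.map_apply ψ.measurable hDmeas,
    (measurePreserving_piFinSuccAbove (fun _ : Fin (n + 1) => μ) i₀).map_eq,
    Measure.prod_apply_symm hDmeas]
  have hsec : ∀ y : Fin n → Euc d, μ ((fun x => (x, y)) ⁻¹' D) = 0 := by
    intro y
    have hsect : (fun x : Euc d => (x, y)) ⁻¹' D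
        = {a : Euc d | ⟪w i₀, a⟫ = c - ∑ j, ⟪w (i₀.succAbove j), y j⟫} := by
      ext a
      simp only [Set.mem_preimage, hD, Set.mem_setOf_eq]
      constructor <;> intro hh <;> linarith
    rw [hsect]
    exact hac (hyperplane_null hw _)
  simp [hsec]

lemma tie_null (μ : Measure (Euc d)) [IsProbabilityMeasure μ] (hac : μ ≪ volume)
    {h : Fin n → Euc d} (hinj : Function.Injective h) {σ τ : Equiv.Perm (Fin n)} (hne : σ ≠ τ) :
    Measure.pi (fun _ : Fin n => μ) {x | cost h x σ = cost h x τ} = 0 := by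
  obtain ⟨i₀, hi₀⟩ : ∃ i, σ i ≠ τ i := by
    by_contra hcon
    push_neg at hcon
    exact hne (Equiv.ext hcon)
  set w : Fin n → Euc d := fun i => h (τ i) - h (σ i) with hwdef
  have hw : w i₀ ≠ 0 := sub_ne_zero.2 fun e => hi₀ (hinj e).symm
  have hexp : ∀ (x : Fin n → Euc d) (ρ : Equiv.Perm (Fin n)),
      cost h x ρ = (∑ i, ‖x i‖ ^ 2) - 2 * (∑ i, ⟪h (ρ i), x i⟫) + ∑ j, ‖h j‖ ^ 2 := by
    intro x ρ
    have hterm : ∀ i : Fin n, ‖x i - h (ρ i)‖ ^ 2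
        = ‖x i‖ ^ 2 - 2 * ⟪h (ρ i), x i⟫ + ‖h (ρ i)‖ ^ 2 := by
      intro i
      rw [@norm_sub_sq_real, real_inner_comm]
    calc cost h x ρ = ∑ i, (‖x i‖ ^ 2 - 2 * ⟪h (ρ i), x i⟫ + ‖h (ρ i)‖ ^ 2) :=
          Finset.sum_congr rfl fun i _ => hterm i
      _ = (∑ i, ‖x i‖ ^ 2) - 2 * (∑ i, ⟪h (ρ i), x i⟫) + ∑ i, ‖h (ρ i)‖ ^ 2 := by
          rw [Finset.sum_add_distrib, Finset.sum_sub_distrib, Finset.mul_sum]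
      _ = (∑ i, ‖x i‖ ^ 2) - 2 * (∑ i, ⟪h (ρ i), x i⟫) + ∑ j, ‖h j‖ ^ 2 := by
          rw [Equiv.sum_comp ρ (fun j => ‖h j‖ ^ 2)]
  have hkey : {x : Fin n → Euc d | cost h x σ = cost h x τ}
      = {x | ∑ i, ⟪w i, x i⟫ = 0} := by
    ext x
    simp only [Set.mem_setOf_eq]
    have hsum : ∑ i, ⟪w i, x i⟫
        = (∑ i, ⟪h (τ i), x i⟫) - ∑ i, ⟪h (σ i), x i⟫ := by
      rw [← Finset.sum_sub_distrib]
      exact Finset.sum_congr rfl fun i _ => inner_sub_left _ _ _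
    rw [hexp x σ, hexp x τ, hsum]
    constructor <;> intro hh <;> linarith
  rw [hkey]
  exact pi_inner_null μ hac w i₀ hw 0

lemma map_perm_pi (μ : Measure (Euc d)) [IsProbabilityMeasure μ] (e : Equiv.Perm (Fin n)) :
    Measure.map (fun x : Fin n → Euc d => x ∘ e) (Measure.pi fun _ => μ)
      = Measure.pi fun _ => μ := by
  have hmeas : Measurable (fun x : Fin n → Euc d => x ∘ e) :=
    measurable_pi_lambda _ fun j => measurable_pi_apply _
  refine (Measure.pi_eq fun s hs => ?_).symm
  rw [Measure.map_apply hmeas (MeasurableSet.univ_pi hs)]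
  have hpre : (fun x : Fin n → Euc d => x ∘ e) ⁻¹' Set.pi Set.univ s
      = Set.pi Set.univ (fun j => s (e.symm j)) := by
    ext x
    simp only [Set.mem_preimage, Set.mem_pi, Set.mem_univ, forall_true_left, Function.comp]
    constructor
    · intro H j
      simpa using H (e.symm j)
    · intro H i
      simpa using H (e i)
  rw [hpre, Measure.pi_pi]
  exact Equiv.prod_comp e.symm fun j => μ (s j)

lemma cost_comp (h : Fin n → Euc d) (x : Fin n → Euc d) (e σ : Equiv.Perm (Fin n)) :
    cost h (x ∘ e) σ = cost h x (e.symm.trans σ) := by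
  unfold cost
  have := Equiv.sum_comp e (fun j => ‖x j - h (σ (e.symm j))‖ ^ 2)
  simp only [Equiv.symm_apply_apply] at this
  simpa [Function.comp, Equiv.trans_apply] using this

lemma preimage_strictSet (h : Fin n → Euc d) (e τ : Equiv.Perm (Fin n)) :
    (fun x : Fin n → Euc d => x ∘ e) ⁻¹' strictSet h τ = strictSet h (e.symm.trans τ) := by
  ext x
  simp only [Set.mem_preimage, strictSet, Set.mem_setOf_eq]
  constructor
  · intro H σ' hσ'
    have hback : e.symm.trans (e.trans σ') = σ' := by
      ext j; simp
    have hne : e.trans σ' ≠ τ := by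
      intro heq
      apply hσ'
      rw [← hback, heq]
    have := H (e.trans σ') hne
    rw [cost_comp, cost_comp, hback] at this
    exact this
  · intro H σ hσ
    rw [cost_comp, cost_comp]
    apply H
    intro heq
    apply hσ
    exact Equiv.ext fun j => by simpa using DFunLike.congr_fun heq (e j)

lemma measure_strictSet_eq (μ : Measure (Euc d)) [IsProbabilityMeasure μ]
    (h : Fin n → Euc d) (τ ρ : Equiv.Perm (Fin n)) :
    Measure.pi (fun _ : Fin n => μ) (strictSet h τ)
      = Measure.pi (fun _ : Fin n => μ) (strictSet h ρ) := by
  set e : Equiv.Perm (Fin n) := (ρ.trans τ.symm).symm with he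
  have heρ : e.symm.trans τ = ρ := by
    ext j; simp [he]
  have hmeas : Measurable (fun x : Fin n → Euc d => x ∘ e) :=
    measurable_pi_lambda _ fun j => measurable_pi_apply _
  calc Measure.pi (fun _ : Fin n => μ) (strictSet h τ)
      = Measure.map (fun x : Fin n → Euc d => x ∘ e) (Measure.pi fun _ => μ)
          (strictSet h τ) := by rw [map_perm_pi]
    _ = Measure.pi (fun _ : Fin n => μ)
          ((fun x : Fin n → Euc d => x ∘ e) ⁻¹' strictSet h τ) :=
        Measure.map_apply hmeas (measurableSet_strictSet h τ)
    _ = Measure.pi (fun _ : Fin n => μ) (strictSet h ρ) := by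
        rw [preimage_strictSet, heρ]

lemma tieSet_null (μ : Measure (Euc d)) [IsProbabilityMeasure μ] (hac : μ ≪ volume)
    {h : Fin n → Euc d} (hinj : Function.Injective h) :
    Measure.pi (fun _ : Fin n => μ)
      {x | ∃ σ ρ : Equiv.Perm (Fin n), σ ≠ ρ ∧ cost h x σ = cost h x ρ} = 0 := by
  have hsub : {x : Fin n → Euc d | ∃ σ ρ : Equiv.Perm (Fin n), σ ≠ ρ ∧ cost h x σ = cost h x ρ}
      ⊆ ⋃ (σ : Equiv.Perm (Fin n)) (ρ : Equiv.Perm (Fin n)),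
          {x | σ ≠ ρ ∧ cost h x σ = cost h x ρ} := by
    rintro x ⟨σ, ρ, h1, h2⟩
    exact Set.mem_iUnion.2 ⟨σ, Set.mem_iUnion.2 ⟨ρ, h1, h2⟩⟩
  apply measure_mono_null hsub
  apply measure_iUnion_null
  intro σ
  apply measure_iUnion_null
  intro ρ
  by_cases hσρ : σ = ρ
  · simp [hσρ]
  · apply measure_mono_null (fun x hx => hx.2)
    exact tie_null μ hac hinj hσρ

lemma measurableSet_tieSet (h : Fin n → Euc d) :
    MeasurableSet {x : Fin n → Euc d |
      ∃ σ ρ : Equiv.Perm (Fin n), σ ≠ ρ ∧ cost h x σ = cost h x ρ} := by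
  have hrw : {x : Fin n → Euc d | ∃ σ ρ : Equiv.Perm (Fin n), σ ≠ ρ ∧ cost h x σ = cost h x ρ}
      = ⋃ (σ : Equiv.Perm (Fin n)) (ρ : Equiv.Perm (Fin n)),
          {x | σ ≠ ρ ∧ cost h x σ = cost h x ρ} := by
    ext x
    simp [Set.mem_iUnion]
  rw [hrw]
  refine MeasurableSet.iUnion fun σ => MeasurableSet.iUnion fun ρ => ?_
  by_cases hσρ : σ = ρ
  · simp [hσρ]
  · have : {x : Fin n → Euc d | σ ≠ ρ ∧ cost h x σ = cost h x ρ}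
        = {x | cost h x σ = cost h x ρ} := by
      ext x; simp [hσρ]
    rw [this]
    exact measurableSet_eq_fun (measurable_cost h σ) (measurable_cost h ρ)

lemma measure_strictSet (μ : Measure (Euc d)) [IsProbabilityMeasure μ] (hac : μ ≪ volume)
    (h : Fin n → Euc d) (hinj : Function.Injective h) (τ : Equiv.Perm (Fin n)) :
    Measure.pi (fun _ : Fin n => μ) (strictSet h τ) = ((n.factorial : ℝ≥0∞))⁻¹ := by
  set m := Measure.pi (fun _ : Fin n => μ) with hm
  have hTie : m {x | ∃ σ ρ : Equiv.Perm (Fin n), σ ≠ ρ ∧ cost h x σ = cost h x ρ} = 0 :=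
    tieSet_null μ hac hinj
  have hcover : Set.univ ⊆
      {x : Fin n → Euc d | ∃ σ ρ : Equiv.Perm (Fin n), σ ≠ ρ ∧ cost h x σ = cost h x ρ}
        ∪ ⋃ τ' : Equiv.Perm (Fin n), strictSet h τ' := by
    intro x _
    by_cases hx : ∃ σ ρ : Equiv.Perm (Fin n), σ ≠ ρ ∧ cost h x σ = cost h x ρ
    · exact Or.inl hx
    · right
      obtain ⟨τ', _, hmin⟩ := Finset.exists_min_image Finset.univ (fun ρ => cost h x ρ)
        ⟨1, Finset.mem_univ 1⟩
      refine Set.mem_iUnion.2 ⟨τ', fun σ hσ => lt_of_le_of_ne (hmin σ (Finset.mem_univ σ)) ?_⟩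
      intro heq
      exact hx ⟨τ', σ, hσ.symm, heq⟩
  have hone : m (⋃ τ' : Equiv.Perm (Fin n), strictSet h τ') = 1 := by
    refine le_antisymm prob_le_one ?_
    calc (1 : ℝ≥0∞) = m Set.univ := (measure_univ).symm
      _ ≤ m ({x | ∃ σ ρ : Equiv.Perm (Fin n), σ ≠ ρ ∧ cost h x σ = cost h x ρ}
            ∪ ⋃ τ' : Equiv.Perm (Fin n), strictSet h τ') := measure_mono hcover
      _ ≤ m {x | ∃ σ ρ : Equiv.Perm (Fin n), σ ≠ ρ ∧ cost h x σ = cost h x ρ}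
            + m (⋃ τ' : Equiv.Perm (Fin n), strictSet h τ') := measure_union_le _ _
      _ = m (⋃ τ' : Equiv.Perm (Fin n), strictSet h τ') := by rw [hTie, zero_add]
  have hsum : ∑ τ' : Equiv.Perm (Fin n), m (strictSet h τ') = 1 := by
    rw [← tsum_fintype (L := .unconditional _), ← measure_iUnion ?_ (fun τ' => measurableSet_strictSet h τ'), hone]
    intro τ₁ τ₂ hne
    exact strictSet_disjoint h hne
  have hall : ∀ τ' : Equiv.Perm (Fin n), m (strictSet h τ') = m (strictSet h τ) :=
    fun τ' => measure_strictSet_eq μ h τ' τ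
  rw [Finset.sum_congr rfl (fun τ' _ => hall τ'), Finset.sum_const] at hsum
  have hcard : (Finset.univ : Finset (Equiv.Perm (Fin n))).card = n.factorial := by
    rw [Finset.card_univ, Fintype.card_perm, Fintype.card_fin]
  rw [hcard, nsmul_eq_mul] at hsum
  have hne0 : ((n.factorial : ℕ) : ℝ≥0∞) ≠ 0 := by
    exact_mod_cast Nat.cast_ne_zero.2 n.factorial_ne_zero
  have hnetop : ((n.factorial : ℕ) : ℝ≥0∞) ≠ ⊤ := ENNReal.natCast_ne_top _
  calc m (strictSet h τ)
      = ((n.factorial : ℝ≥0∞))⁻¹ * ((n.factorial : ℝ≥0∞) * m (strictSet h τ)) := by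
        rw [← mul_assoc, ENNReal.inv_mul_cancel hne0 hnetop, one_mul]
    _ = ((n.factorial : ℝ≥0∞))⁻¹ := by rw [hsum, mul_one]

end Stmt8Aux

open Stmt8Aux

/-- Distribution-freeness of `RdCov_n²` under the null hypothesis of independence: its law
coincides with the law of the same functional with the empirical ranks replaced by two
independent uniformly random orderings of the two grids; in particular it does not depend on
`(μ_X, μ_Y)`. -/
theorem stmt8
    {d₁ d₂ n : ℕ} {Ω : Type*} [MeasurableSpace Ω] (P : Measure Ω) [IsProbabilityMeasure P]
    (μX : Measure (Euc d₁)) (μY : Measure (Euc d₂))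
    [IsProbabilityMeasure μX] [IsProbabilityMeasure μY]
    (hacX : μX ≪ volume) (hacY : μY ≪ volume)
    (X : Fin n → Ω → Euc d₁) (Y : Fin n → Ω → Euc d₂)
    (hXmeas : ∀ i, Measurable (X i)) (hYmeas : ∀ i, Measurable (Y i))
    (hiid : iIndepFun (fun i ω => (X i ω, Y i ω)) P)
    (hlaw : ∀ i, Measure.map (fun ω => (X i ω, Y i ω)) P = μX.prod μY)
    (hX : Fin n → Euc d₁) (hY : Fin n → Euc d₂)
    (hXcube : ∀ i, hX i ∈ unitCube d₁) (hYcube : ∀ i, hY i ∈ unitCube d₂)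
    (hXinj : Function.Injective hX) (hYinj : Function.Injective hY)
    (σX σY : Ω → Equiv.Perm (Fin n))
    (hσXmeas : ∀ σ₀ : Equiv.Perm (Fin n), MeasurableSet {ω | σX ω = σ₀})
    (hσYmeas : ∀ σ₀ : Equiv.Perm (Fin n), MeasurableSet {ω | σY ω = σ₀})
    (hoptX : ∀ᵐ ω ∂P, IsOptAssign (fun i => X i ω) hX (σX ω))
    (hoptY : ∀ᵐ ω ∂P, IsOptAssign (fun i => Y i ω) hY (σY ω)) :
    ∀ B : Set ℝ, MeasurableSet B →
      P {ω | rdcovStat n (fun k => hX (σX ω k)) (fun k => hY (σY ω k)) ∈ B}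
        = ((Finset.univ.filter
              (fun p : Equiv.Perm (Fin n) × Equiv.Perm (Fin n) =>
                rdcovStat n (fun k => hX (p.1 k)) (fun k => hY (p.2 k)) ∈ B)).card : ℝ≥0∞)
          / ((Nat.factorial n : ℝ≥0∞) * (Nat.factorial n : ℝ≥0∞)) := by
  intro B hB
  set Xv : Ω → (Fin n → Euc d₁) := fun ω i => X i ω with hXv
  set Yv : Ω → (Fin n → Euc d₂) := fun ω i => Y i ω with hYv
  have hXvmeas : Measurable Xv := measurable_pi_lambda _ hXmeas
  have hYvmeas : Measurable Yv := measurable_pi_lambda _ hYmeas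
  set Z : Ω → (Fin n → Euc d₁ × Euc d₂) := fun ω i => (X i ω, Y i ω) with hZ
  have hZmeas : Measurable Z :=
    measurable_pi_lambda _ fun i => (hXmeas i).prodMk (hYmeas i)
  -- law of the joint sample vector
  have hZlaw : Measure.map Z P = Measure.pi (fun _ : Fin n => μX.prod μY) := by
    refine (Measure.pi_eq fun s hs => ?_).symm
    rw [Measure.map_apply hZmeas (MeasurableSet.univ_pi hs)]
    have hpre : Z ⁻¹' Set.pi Set.univ s
        = ⋂ i ∈ Finset.univ, (fun ω => (X i ω, Y i ω)) ⁻¹' s i := by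
      ext ω; simp [hZ, Set.mem_pi]
    rw [hpre, hiid.measure_inter_preimage_eq_mul Finset.univ (fun i _ => hs i)]
    refine Finset.prod_congr rfl fun i _ => ?_
    rw [← hlaw i, Measure.map_apply ((hXmeas i).prodMk (hYmeas i)) (hs i)]
  have hXYlaw : Measure.map (fun ω => (Xv ω, Yv ω)) P
      = (Measure.pi fun _ : Fin n => μX).prod (Measure.pi fun _ : Fin n => μY) := by
    have hcomp : (fun ω => (Xv ω, Yv ω))
        = (MeasurableEquiv.arrowProdEquivProdArrow (Euc d₁) (Euc d₂) (Fin n)) ∘ Z := rfl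
    rw [hcomp, ← Measure.map_map (MeasurableEquiv.measurable _) hZmeas, hZlaw,
      (measurePreserving_arrowProdEquivProdArrow (Euc d₁) (Euc d₂) (Fin n)
        (fun _ => μX) (fun _ => μY)).map_eq]
  have hXlaw : Measure.map Xv P = Measure.pi (fun _ : Fin n => μX) := by
    have hcomp : Xv = Prod.fst ∘ (fun ω => (Xv ω, Yv ω)) := rfl
    rw [hcomp, ← Measure.map_map measurable_fst (hXvmeas.prodMk hYvmeas), hXYlaw,
      Measure.map_fst_prod]
    simp
  have hYlaw : Measure.map Yv P = Measure.pi (fun _ : Fin n => μY) := by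
    have hcomp : Yv = Prod.snd ∘ (fun ω => (Xv ω, Yv ω)) := rfl
    rw [hcomp, ← Measure.map_map measurable_snd (hXvmeas.prodMk hYvmeas), hXYlaw,
      Measure.map_snd_prod]
    simp
  -- almost surely no ties
  have hnoTieX : ∀ᵐ ω ∂P,
      ¬∃ σ ρ : Equiv.Perm (Fin n), σ ≠ ρ ∧ cost hX (Xv ω) σ = cost hX (Xv ω) ρ := by
    have hnull : P (Xv ⁻¹' {x | ∃ σ ρ : Equiv.Perm (Fin n),
        σ ≠ ρ ∧ cost hX x σ = cost hX x ρ}) = 0 := by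
      rw [← Measure.map_apply hXvmeas (measurableSet_tieSet hX), hXlaw]
      exact tieSet_null μX hacX hXinj
    rw [ae_iff]
    simpa using hnull
  have hnoTieY : ∀ᵐ ω ∂P,
      ¬∃ σ ρ : Equiv.Perm (Fin n), σ ≠ ρ ∧ cost hY (Yv ω) σ = cost hY (Yv ω) ρ := by
    have hnull : P (Yv ⁻¹' {x | ∃ σ ρ : Equiv.Perm (Fin n),
        σ ≠ ρ ∧ cost hY x σ = cost hY x ρ}) = 0 := by
      rw [← Measure.map_apply hYvmeas (measurableSet_tieSet hY), hYlaw]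
      exact tieSet_null μY hacY hYinj
    rw [ae_iff]
    simpa using hnull
  -- a.e. identification of the random permutations with the strict argmin sets
  have hXiff : ∀ᵐ ω ∂P, ∀ τ₀ : Equiv.Perm (Fin n),
      σX ω = τ₀ ↔ Xv ω ∈ strictSet hX τ₀ := by
    filter_upwards [hoptX, hnoTieX] with ω hopt hnot
    intro τ₀
    have hxmem : Xv ω ∈ strictSet hX (σX ω) := by
      intro σ hσ
      refine lt_of_le_of_ne (hopt σ) fun heq => hnot ⟨σX ω, σ, hσ.symm, heq⟩
    constructor
    · rintro rfl; exact hxmem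
    · intro hmem
      by_contra hne
      exact Set.disjoint_left.1 (strictSet_disjoint hX hne) hxmem hmem
  have hYiff : ∀ᵐ ω ∂P, ∀ τ₀ : Equiv.Perm (Fin n),
      σY ω = τ₀ ↔ Yv ω ∈ strictSet hY τ₀ := by
    filter_upwards [hoptY, hnoTieY] with ω hopt hnot
    intro τ₀
    have hxmem : Yv ω ∈ strictSet hY (σY ω) := by
      intro σ hσ
      refine lt_of_le_of_ne (hopt σ) fun heq => hnot ⟨σY ω, σ, hσ.symm, heq⟩
    constructor
    · rintro rfl; exact hxmem
    · intro hmem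
      by_contra hne
      exact Set.disjoint_left.1 (strictSet_disjoint hY hne) hxmem hmem
  -- probability of each cell
  have hcell : ∀ p : Equiv.Perm (Fin n) × Equiv.Perm (Fin n),
      P ({ω | σX ω = p.1} ∩ {ω | σY ω = p.2})
        = ((n.factorial : ℝ≥0∞))⁻¹ * ((n.factorial : ℝ≥0∞))⁻¹ := by
    intro p
    have hC : P ((fun ω => (Xv ω, Yv ω)) ⁻¹' (strictSet hX p.1 ×ˢ strictSet hY p.2))
        = ((n.factorial : ℝ≥0∞))⁻¹ * ((n.factorial : ℝ≥0∞))⁻¹ := by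
      rw [← Measure.map_apply (hXvmeas.prodMk hYvmeas)
          ((measurableSet_strictSet hX p.1).prod (measurableSet_strictSet hY p.2)),
        hXYlaw, Measure.prod_prod,
        measure_strictSet μX hacX hX hXinj p.1, measure_strictSet μY hacY hY hYinj p.2]
    have hae : ({ω | σX ω = p.1} ∩ {ω | σY ω = p.2} : Set Ω)
        =ᵐ[P] ((fun ω => (Xv ω, Yv ω)) ⁻¹' (strictSet hX p.1 ×ˢ strictSet hY p.2) : Set Ω) := by
      refine Filter.eventuallyEq_set.2 ?_
      filter_upwards [hXiff, hYiff] with ω h1 h2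
      simp only [Set.mem_inter_iff, Set.mem_setOf_eq, Set.mem_preimage, Set.mem_prod]
      rw [h1 p.1, h2 p.2]
    rw [measure_congr hae, hC]
  -- split the event according to the value of the pair of permutations
  set F : Finset (Equiv.Perm (Fin n) × Equiv.Perm (Fin n)) :=
    Finset.univ.filter
      (fun p : Equiv.Perm (Fin n) × Equiv.Perm (Fin n) =>
        rdcovStat n (fun k => hX (p.1 k)) (fun k => hY (p.2 k)) ∈ B) with hF
  have hsplit : {ω | rdcovStat n (fun k => hX (σX ω k)) (fun k => hY (σY ω k)) ∈ B}
      = ⋃ p ∈ F, ({ω | σX ω = p.1} ∩ {ω | σY ω = p.2}) := by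
    ext ω
    simp only [Set.mem_setOf_eq, Set.mem_iUnion, Finset.mem_filter, Finset.mem_univ,
      true_and, Set.mem_inter_iff, exists_prop, hF]
    constructor
    · intro hmem
      exact ⟨(σX ω, σY ω), hmem, rfl, rfl⟩
    · rintro ⟨p, hp, h1, h2⟩
      rw [h1, h2]
      exact hp
  rw [hsplit, measure_biUnion_finset ?_ (fun p _ => (hσXmeas p.1).inter (hσYmeas p.2))]
  · rw [Finset.sum_congr rfl (fun p _ => hcell p), Finset.sum_const, nsmul_eq_mul]
    rw [div_eq_mul_inv, ENNReal.mul_inv (Or.inl ?hne0) (Or.inl ?hnetop)]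
    case hne0 => exact_mod_cast Nat.cast_ne_zero.2 n.factorial_ne_zero
    case hnetop => exact ENNReal.natCast_ne_top _
  · intro p hp q hq hpq
    rw [Function.onFun, Set.disjoint_left]
    rintro ω ⟨h1, h2⟩ ⟨h3, h4⟩
    exact hpq (Prod.ext (h1.symm.trans h3) (h2.symm.trans h4))

end
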